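/- Define the Farey sequences F_m of lists of pairs of nonnegative integers inductively: F₁ = ((0,1),(1,0)), and F_{m+1} is obtained from F_m by inserting between each pair of consecutive entries (a,b) and (c,d) the mediant (a+c, b+d). Then every positive rational number a/b in lowest terms appears as an entry of F_m for some m. -/
import Mathlib


/-- One step of the Farey/mediant construction: insert between each pair of consecutive
entries (a,b) and (c,d) the mediant (a+c, b+d). -/
def fareyStep : List (ℕ × ℕ) → List (ℕ × ℕ)
  | [] => []
  | [x] => [x]
  | x :: y :: rest => x :: (x.1 + y.1, x.2 + y.2) :: fareyStep (y :: rest)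

/-- The Farey sequences: `farey 0` is F₁ = ((0,1),(1,0)), and F_{m+1} = fareyStep F_m. -/
def farey : ℕ → List (ℕ × ℕ)
  | 0 => [(0, 1), (1, 0)]
  | m + 1 => fareyStep (farey m)

/-- Stern–Brocot adjacency generated abstractly. -/
inductive SB : ℕ × ℕ → ℕ × ℕ → Prop
  | base : SB (0, 1) (1, 0)
  | left {x y} : SB x y → SB x (x.1 + y.1, x.2 + y.2)
  | right {x y} : SB x y → SB (x.1 + y.1, x.2 + y.2) y

lemma fareyStep_cons (y : ℕ × ℕ) (t : List (ℕ × ℕ)) :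
    ∃ r, fareyStep (y :: t) = y :: r := by
  cases t with
  | nil => exact ⟨[], rfl⟩
  | cons a s => exact ⟨_, rfl⟩

lemma fareyStep_adj (x y : ℕ × ℕ) (l1 l2 : List (ℕ × ℕ)) :
    ∃ s1 s2, fareyStep (l1 ++ x :: y :: l2)
      = s1 ++ x :: (x.1 + y.1, x.2 + y.2) :: y :: s2 := by
  induction l1 with
  | nil =>
      obtain ⟨r, hr⟩ := fareyStep_cons y l2
      refine ⟨[], r, ?_⟩
      simp only [List.nil_append, fareyStep, hr]
  | cons z l1' ih =>
      obtain ⟨s1, s2, hs⟩ := ih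
      cases hl : l1' ++ x :: y :: l2 with
      | nil => simp at hl
      | cons w rest =>
          refine ⟨z :: (z.1 + w.1, z.2 + w.2) :: s1, s2, ?_⟩
          have : fareyStep (z :: (l1' ++ x :: y :: l2))
              = z :: (z.1 + w.1, z.2 + w.2) :: fareyStep (w :: rest) := by
            rw [hl]; rfl
          rw [List.cons_append, this, ← hl, hs]
          rfl

/-- Every SB-pair occurs adjacently in some Farey sequence. -/
lemma SB_adj {x y : ℕ × ℕ} (h : SB x y) :
    ∃ m l1 l2, farey m = l1 ++ x :: y :: l2 := by
  induction h with
  | base => exact ⟨0, [], [], rfl⟩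
  | @left x y h ih =>
      obtain ⟨m, l1, l2, hm⟩ := ih
      obtain ⟨s1, s2, hs⟩ := fareyStep_adj x y l1 l2
      exact ⟨m + 1, s1, y :: s2, by rw [farey, hm, hs]⟩
  | @right x y h ih =>
      obtain ⟨m, l1, l2, hm⟩ := ih
      obtain ⟨s1, s2, hs⟩ := fareyStep_adj x y l1 l2
      exact ⟨m + 1, s1 ++ [x], s2, by rw [farey, hm, hs]; simp⟩

lemma keyC : ∀ n p q, p + q = n → 0 < p → 0 < q → Nat.gcd p q = 1 →
    ∀ x y : ℕ × ℕ, SB x y →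
    ∃ x' y', SB x' y' ∧ x'.1 + y'.1 = p * x.1 + q * y.1 ∧
      x'.2 + y'.2 = p * x.2 + q * y.2 := by
  intro n
  induction n using Nat.strong_induction_on with
  | _ n ih =>
    intro p q hn hp hq hg x y hxy
    rcases lt_trichotomy p q with hlt | heq | hgt
    · have hg' : Nat.gcd p (q - p) = 1 := by
        rwa [Nat.gcd_sub_self_right hlt.le]
      obtain ⟨x', y', hsb, h1, h2⟩ :=
        ih (p + (q - p)) (by omega) p (q - p) rfl hp (by omega) hg'
          (x.1 + y.1, x.2 + y.2) y (SB.right hxy)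
      refine ⟨x', y', hsb, ?_, ?_⟩
      · zify [hlt.le] at h1 ⊢; linear_combination h1
      · zify [hlt.le] at h2 ⊢; linear_combination h2
    · have hp1 : p = 1 := by
        have := hg; rw [heq, Nat.gcd_self] at this; omega
      refine ⟨x, y, hxy, ?_, ?_⟩ <;> simp [hp1, ← heq]
    · have hg' : Nat.gcd (p - q) q = 1 := by
        rwa [Nat.gcd_sub_self_left hgt.le]
      obtain ⟨x', y', hsb, h1, h2⟩ :=
        ih ((p - q) + q) (by omega) (p - q) q rfl (by omega) hq hg'
          x (x.1 + y.1, x.2 + y.2) (SB.left hxy)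
      refine ⟨x', y', hsb, ?_, ?_⟩
      · zify [hgt.le] at h1 ⊢; linear_combination h1
      · zify [hgt.le] at h2 ⊢; linear_combination h2

/-- Every positive rational number a/b in lowest terms appears as an entry
of F_m for some m. -/
theorem stmt_5 (a b : ℕ) (ha : 0 < a) (hb : 0 < b) (h : Nat.gcd a b = 1) :
    ∃ m, (a, b) ∈ farey m := by
  obtain ⟨x', y', hsb, h1, h2⟩ :=
    keyC (b + a) b a rfl hb ha (Nat.gcd_comm a b ▸ h) (0, 1) (1, 0) SB.base
  simp only [mul_zero, mul_one, zero_add, add_zero] at h1 h2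
  obtain ⟨m, l1, l2, hm⟩ := SB_adj hsb
  obtain ⟨s1, s2, hs⟩ := fareyStep_adj x' y' l1 l2
  refine ⟨m + 1, ?_⟩
  rw [farey, hm, hs, h1, h2]
  simp
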